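/- Let C be an Archimedean copula with generator φ, i.e., C(u₁,…,uₙ) = φ⁻¹(φ(u₁)+⋯+φ(uₙ)), where φ : (0,1] → [0,∞) is continuous, strictly decreasing, φ(1) = 0, and log φ⁻¹ is regularly varying at ∞ with index λ > 0 (i.e., −log φ⁻¹ ∈ R_λ). Then for all α₁,…,αₙ > 0, the weak lower tail dependence function of C is χ(α₁,…,αₙ) = max(α₁,…,αₙ)/(α₁^{1/λ} + ⋯ + αₙ^{1/λ})^λ. -/

import Mathlib

open Filter

/-- For an Archimedean copula C(u) = φ⁻¹(∑ φ(uᵢ)) whose generator inverse satisfies that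
−log φ⁻¹ is regularly varying at ∞ with index λ > 0, the weak lower tail dependence
function is χ(α) = max αᵢ / (∑ αᵢ^{1/λ})^λ. -/
theorem archimedean_chi (n : ℕ) (hn : 0 < n) (lam : ℝ) (hlam : 0 < lam)
    (φ φinv : ℝ → ℝ)
    (hφcont : ContinuousOn φ (Set.Ioc 0 1))
    (hφanti : StrictAntiOn φ (Set.Ioc 0 1))
    (hφ1 : φ 1 = 0)
    (hφnonneg : ∀ u ∈ Set.Ioc (0:ℝ) 1, 0 ≤ φ u)
    (hinvl : ∀ u ∈ Set.Ioc (0:ℝ) 1, φinv (φ u) = u)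
    (hinvr : ∀ s : ℝ, 0 ≤ s → φ (φinv s) = s)
    (hinvrange : ∀ s : ℝ, 0 ≤ s → φinv s ∈ Set.Ioc (0:ℝ) 1)
    (hrv : ∀ t > (0 : ℝ),
      Tendsto (fun x => (-Real.log (φinv (t * x))) / (-Real.log (φinv x)))
        atTop (nhds (t ^ lam))) :
    ∀ α : Fin n → ℝ, (∀ i, 0 < α i) →
      Tendsto (fun u : ℝ =>
          (⨅ i, α i * Real.log u) / Real.log (φinv (∑ i, φ (u ^ α i))))
        (nhdsWithin 0 (Set.Ioi 0))
        (nhds ((⨆ i, α i) / (∑ i, (α i) ^ (1 / lam)) ^ lam)) := by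
  intro α hα
  haveI : Nonempty (Fin n) := Fin.pos_iff_nonempty.mp hn
  have hφinvpos : ∀ s : ℝ, 0 ≤ s → 0 < φinv s := fun s hs => (hinvrange s hs).1
  -- monotonicity of L x = -log (φinv x) on [0, ∞)
  have hLmono : ∀ a b : ℝ, 0 ≤ a → a ≤ b →
      -Real.log (φinv a) ≤ -Real.log (φinv b) := by
    intro a b ha hab
    have hb : 0 ≤ b := ha.trans hab
    have hinv : φinv b ≤ φinv a := by
      by_contra h
      push_neg at h
      have h2 := hφanti (hinvrange a ha) (hinvrange b hb) h
      rw [hinvr a ha, hinvr b hb] at h2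
      exact absurd hab (not_le.2 h2)
    have := Real.log_le_log (hφinvpos b hb) hinv
    linarith
  -- φ tends to infinity at 0⁺
  have hφtop : Tendsto φ (nhdsWithin (0:ℝ) (Set.Ioi 0)) atTop := by
    rw [tendsto_atTop]
    intro M
    have hM : (0:ℝ) ≤ max M 0 + 1 := by positivity
    have hv := hinvrange (max M 0 + 1) hM
    filter_upwards [Ioo_mem_nhdsGT_of_mem
      (Set.mem_Ico.2 ⟨le_refl (0:ℝ), hv.1⟩)] with u hu
    have huI : u ∈ Set.Ioc (0:ℝ) 1 := ⟨hu.1, hu.2.le.trans hv.2⟩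
    have h2 := hφanti huI hv hu.2
    rw [hinvr _ hM] at h2
    have : M ≤ max M 0 + 1 := by
      have := le_max_left M 0; linarith
    linarith
  have hRV' : ∀ t : ℝ, 0 < t →
      Tendsto (fun u : ℝ => (-Real.log (φinv (t * φ u))) / (-Real.log (φinv (φ u))))
        (nhdsWithin (0:ℝ) (Set.Ioi 0)) (nhds (t ^ lam)) := fun t ht =>
    (hrv t ht).comp hφtop
  have hUoo : ∀ᶠ u in nhdsWithin (0:ℝ) (Set.Ioi 0), u ∈ Set.Ioo (0:ℝ) 1 :=
    Ioo_mem_nhdsGT_of_mem (Set.mem_Ico.2 ⟨le_refl (0:ℝ), one_pos⟩)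
  have hLφupos : ∀ᶠ u in nhdsWithin (0:ℝ) (Set.Ioi 0),
      0 < -Real.log (φinv (φ u)) := by
    filter_upwards [hUoo] with u hu
    rw [hinvl u ⟨hu.1, hu.2.le⟩]
    exact neg_pos.mpr (Real.log_neg hu.1 hu.2)
  set S : ℝ := ∑ i, (α i) ^ (1 / lam) with hS
  have hSpos : 0 < S :=
    Finset.sum_pos (fun i _ => Real.rpow_pos_of_pos (hα i) _) Finset.univ_nonempty
  -- key sandwich bounds for the generator sum
  have key : ∀ r : ℝ, 1 < r → (∀ᶠ u in nhdsWithin (0:ℝ) (Set.Ioi 0),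
      -Real.log (φinv (r⁻¹ * S * φ u)) ≤ -Real.log (φinv (∑ i, φ (u ^ α i))) ∧
      -Real.log (φinv (∑ i, φ (u ^ α i))) ≤ -Real.log (φinv (r * S * φ u))) := by
    intro r hr
    have hr0 : 0 < r := lt_trans one_pos hr
    have hbound : ∀ i : Fin n, ∀ᶠ u in nhdsWithin (0:ℝ) (Set.Ioi 0),
        r⁻¹ * (α i ^ (1/lam)) * φ u ≤ φ (u ^ α i) ∧
        φ (u ^ α i) ≤ r * (α i ^ (1/lam)) * φ u := by
      intro i
      have hci : 0 < α i ^ (1/lam) := Real.rpow_pos_of_pos (hα i) _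
      have hup := hRV' (r * α i ^ (1/lam)) (by positivity)
      have hlo := hRV' (r⁻¹ * α i ^ (1/lam)) (by positivity)
      have hupval : (r * α i ^ (1/lam)) ^ lam = r ^ lam * α i := by
        rw [Real.mul_rpow hr0.le hci.le, ← Real.rpow_mul (hα i).le,
          one_div_mul_cancel (ne_of_gt hlam), Real.rpow_one]
      have hloval : (r⁻¹ * α i ^ (1/lam)) ^ lam = r⁻¹ ^ lam * α i := by
        rw [Real.mul_rpow (by positivity) hci.le, ← Real.rpow_mul (hα i).le,
          one_div_mul_cancel (ne_of_gt hlam), Real.rpow_one]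
      have hgt : α i < (r * α i ^ (1/lam)) ^ lam := by
        rw [hupval]
        have h1 : 1 < r ^ lam :=
          (Real.one_lt_rpow_iff_of_pos hr0).2 (Or.inl ⟨hr, hlam⟩)
        nlinarith [hα i]
      have hlt : (r⁻¹ * α i ^ (1/lam)) ^ lam < α i := by
        rw [hloval]
        have h1 : r⁻¹ ^ lam < 1 :=
          Real.rpow_lt_one (by positivity) (inv_lt_one_of_one_lt₀ hr) hlam
        nlinarith [hα i]
      filter_upwards [hup.eventually_const_lt hgt, hlo.eventually_lt_const hlt,
        hUoo, hLφupos] with u h1 h2 hu hLpos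
      have huI : u ∈ Set.Ioc (0:ℝ) 1 := ⟨hu.1, hu.2.le⟩
      have hua : u ^ α i ∈ Set.Ioc (0:ℝ) 1 :=
        ⟨Real.rpow_pos_of_pos hu.1 _, Real.rpow_le_one hu.1.le hu.2.le (hα i).le⟩
      have hLa : -Real.log (φinv (φ (u ^ α i))) = α i * (-Real.log (φinv (φ u))) := by
        rw [hinvl _ hua, hinvl _ huI, Real.log_rpow hu.1]
        ring
      have hφu0 : 0 ≤ φ u := hφnonneg u huI
      have hφa0 : 0 ≤ φ (u ^ α i) := hφnonneg _ hua
      constructor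
      · by_contra hcon
        push_neg at hcon
        have hm := hLmono _ _ hφa0 hcon.le
        have h2' : -Real.log (φinv (r⁻¹ * α i ^ (1/lam) * φ u)) <
            α i * (-Real.log (φinv (φ u))) := (div_lt_iff₀ hLpos).mp h2
        linarith [hLa]
      · by_contra hcon
        push_neg at hcon
        have hrcφ : 0 ≤ r * α i ^ (1/lam) * φ u := by positivity
        have hm := hLmono _ _ hrcφ hcon.le
        have h1' : α i * (-Real.log (φinv (φ u))) <
            -Real.log (φinv (r * α i ^ (1/lam) * φ u)) := (lt_div_iff₀ hLpos).mp h1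
        linarith [hLa]
    filter_upwards [eventually_all.2 hbound, hUoo] with u hall hu
    have huI : u ∈ Set.Ioc (0:ℝ) 1 := ⟨hu.1, hu.2.le⟩
    have hφu0 : 0 ≤ φ u := hφnonneg u huI
    have hsum_le : (∑ i, φ (u ^ α i)) ≤ r * S * φ u := by
      calc (∑ i, φ (u ^ α i)) ≤ ∑ i, r * (α i ^ (1/lam)) * φ u :=
            Finset.sum_le_sum (fun i _ => (hall i).2)
        _ = r * S * φ u := by
            rw [hS, ← Finset.sum_mul, ← Finset.mul_sum]
    have hsum_ge : r⁻¹ * S * φ u ≤ ∑ i, φ (u ^ α i) := by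
      calc r⁻¹ * S * φ u = ∑ i, r⁻¹ * (α i ^ (1/lam)) * φ u := by
            rw [hS, ← Finset.sum_mul, ← Finset.mul_sum]
        _ ≤ ∑ i, φ (u ^ α i) := Finset.sum_le_sum (fun i _ => (hall i).1)
    have hlow0 : (0:ℝ) ≤ r⁻¹ * S * φ u := by positivity
    exact ⟨hLmono _ _ hlow0 hsum_ge, hLmono _ _ (hlow0.trans hsum_ge) hsum_le⟩
  -- the main ratio limit
  have hT : Tendsto (fun u : ℝ =>
      (-Real.log (φinv (∑ i, φ (u ^ α i)))) / (-Real.log (φinv (φ u))))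
      (nhdsWithin (0:ℝ) (Set.Ioi 0)) (nhds (S ^ lam)) := by
    have hSlam : 0 < S ^ lam := Real.rpow_pos_of_pos hSpos _
    rw [tendsto_order]
    constructor
    · intro b hb
      obtain ⟨r, hr, hrb⟩ : ∃ r : ℝ, 1 < r ∧ b < (r⁻¹ * S) ^ lam := by
        by_cases hb0 : b ≤ 0
        · exact ⟨2, one_lt_two,
            lt_of_le_of_lt hb0 (Real.rpow_pos_of_pos (by positivity) _)⟩
        · push_neg at hb0
          have hq1 : b / S ^ lam < 1 := (div_lt_one hSlam).2 hb
          have hqpos : 0 < b / S ^ lam := div_pos hb0 hSlam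
          set p : ℝ := (b / S ^ lam) ^ (1/lam) with hp
          have hppos : 0 < p := Real.rpow_pos_of_pos hqpos _
          have hp1 : p < 1 := Real.rpow_lt_one hqpos.le hq1 (by positivity)
          have hip : 1 < p⁻¹ := (one_lt_inv₀ hppos).2 hp1
          refine ⟨(p⁻¹ + 1)/2, by linarith, ?_⟩
          have hrpos : 0 < (p⁻¹ + 1)/2 := by linarith
          have hrlt : (p⁻¹ + 1)/2 < p⁻¹ := by linarith
          have hinv : p < ((p⁻¹ + 1)/2)⁻¹ := by
            have := inv_strictAnti₀ hrpos hrlt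
            rwa [inv_inv] at this
          have hplam : p ^ lam = b / S ^ lam := by
            rw [hp, ← Real.rpow_mul hqpos.le,
              one_div_mul_cancel (ne_of_gt hlam), Real.rpow_one]
          have h2 : p ^ lam < (((p⁻¹ + 1)/2)⁻¹) ^ lam :=
            Real.rpow_lt_rpow hppos.le hinv hlam
          rw [hplam] at h2
          rw [Real.mul_rpow (by positivity) hSpos.le]
          rw [div_lt_iff₀ hSlam] at h2
          linarith
      have hlim := hRV' (r⁻¹ * S) (by positivity)
      filter_upwards [key r hr, hlim.eventually_const_lt hrb, hLφupos]
        with u hk hlt hpos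
      calc b < -Real.log (φinv (r⁻¹ * S * φ u)) / (-Real.log (φinv (φ u))) := hlt
        _ ≤ _ := (div_le_div_iff_of_pos_right hpos).2 hk.1
    · intro b hb
      obtain ⟨r, hr, hrb⟩ : ∃ r : ℝ, 1 < r ∧ (r * S) ^ lam < b := by
        have hq1 : 1 < b / S ^ lam := (one_lt_div hSlam).2 hb
        have hqpos : 0 < b / S ^ lam := lt_trans one_pos hq1
        set p : ℝ := (b / S ^ lam) ^ (1/lam) with hp
        have hp1 : 1 < p :=
          (Real.one_lt_rpow_iff_of_pos hqpos).2 (Or.inl ⟨hq1, by positivity⟩)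
        refine ⟨(p + 1)/2, by linarith, ?_⟩
        have hrpos : (0:ℝ) ≤ (p + 1)/2 := by linarith
        have hrlt : (p + 1)/2 < p := by linarith
        have hplam : p ^ lam = b / S ^ lam := by
          rw [hp, ← Real.rpow_mul hqpos.le,
            one_div_mul_cancel (ne_of_gt hlam), Real.rpow_one]
        have h2 : ((p + 1)/2) ^ lam < p ^ lam :=
          Real.rpow_lt_rpow hrpos hrlt hlam
        rw [hplam, lt_div_iff₀ hSlam] at h2
        rw [Real.mul_rpow hrpos hSpos.le]
        linarith
      have hlim := hRV' (r * S) (by positivity)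
      filter_upwards [key r hr, hlim.eventually_lt_const hrb, hLφupos]
        with u hk hlt hpos
      calc (-Real.log (φinv (∑ i, φ (u ^ α i)))) / (-Real.log (φinv (φ u)))
          ≤ -Real.log (φinv (r * S * φ u)) / (-Real.log (φinv (φ u))) :=
            (div_le_div_iff_of_pos_right hpos).2 hk.2
        _ < b := hlt
  -- assemble
  have hSlam : 0 < S ^ lam := Real.rpow_pos_of_pos hSpos _
  have hfin : Tendsto (fun u : ℝ => (⨆ i, α i) /
      ((-Real.log (φinv (∑ i, φ (u ^ α i)))) / (-Real.log (φinv (φ u)))))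
      (nhdsWithin (0:ℝ) (Set.Ioi 0)) (nhds ((⨆ i, α i) / S ^ lam)) :=
    Filter.Tendsto.div tendsto_const_nhds hT (ne_of_gt hSlam)
  refine Filter.Tendsto.congr' ?_ hfin
  filter_upwards [hUoo] with u hu
  have huI : u ∈ Set.Ioc (0:ℝ) 1 := ⟨hu.1, hu.2.le⟩
  have hinf : (⨆ i, α i) * Real.log u = ⨅ i, α i * Real.log u := by
    have hlog : Real.log u ≤ 0 := Real.log_nonpos hu.1.le hu.2.le
    exact Antitone.map_ciSup_of_continuousAt
      (Continuous.continuousAt (continuous_mul_right _))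
      (fun a b hab => mul_le_mul_of_nonpos_right hab hlog)
      ((Set.finite_range α).bddAbove)
  rw [div_div_eq_mul_div, hinvl u huI, mul_neg, neg_div_neg_eq, hinf]
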